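/- Let $R = k[x_1,\dots,x_m]$ and $I$ a monomial ideal. Then for all $s \ge 1$, $\partial^*(I^s) = \partial^*(I) I^{s-1}$. -/

import Mathlib

open MvPolynomial Pointwise

variable {m : ℕ} {k : Type*}

/-- An ideal of `k[x_1, …, x_m]` is a monomial ideal if it is generated by monomials. -/
def IsMonomialIdeal [Field k] (I : Ideal (MvPolynomial (Fin m) k)) : Prop :=
  ∃ S : Set (Fin m →₀ ℕ), I = Ideal.span ((fun e => monomial e (1 : k)) '' S)

/-- `e` is the exponent vector of a minimal monomial generator of `I`: the monomial `x^e`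
lies in `I` and no proper divisor of it lies in `I`. -/
def IsMinMonomialGen [Field k] (I : Ideal (MvPolynomial (Fin m) k)) (e : Fin m →₀ ℕ) : Prop :=
  monomial e (1 : k) ∈ I ∧ ∀ e' : Fin m →₀ ℕ, e' ≤ e → e' ≠ e → monomial e' (1 : k) ∉ I

/-- `∂*(I)`: the ideal generated by all quotients `f / x_i`, where `f` runs over the minimal
monomial generators of `I` and `x_i` over the variables dividing `f`. -/
noncomputable def partialStar [Field k] (I : Ideal (MvPolynomial (Fin m) k)) :
    Ideal (MvPolynomial (Fin m) k) :=
  Ideal.span { p | ∃ (e : Fin m →₀ ℕ) (i : Fin m), IsMinMonomialGen I e ∧ e i ≠ 0 ∧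
    p = monomial (e - Finsupp.single i 1) (1 : k) }

section Aux

variable [Field k]

lemma mem_span_mono (S : Set (Fin m →₀ ℕ)) (e : Fin m →₀ ℕ) :
    monomial e (1:k) ∈ Ideal.span ((fun c => monomial c (1:k)) '' S) ↔ ∃ c ∈ S, c ≤ e := by
  rw [mem_ideal_span_monomial_image]
  simp [support_monomial]

lemma mono_mem_of_le {L : Ideal (MvPolynomial (Fin m) k)} {c e : Fin m →₀ ℕ} (h : c ≤ e)
    (hc : monomial c (1:k) ∈ L) : monomial e (1:k) ∈ L := by
  have : monomial e (1:k) = monomial (e - c) 1 * monomial c 1 := by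
    rw [monomial_mul, tsub_add_cancel_of_le h, one_mul]
  rw [this]; exact Ideal.mul_mem_left _ _ hc

lemma exists_minGen (I : Ideal (MvPolynomial (Fin m) k)) (e : Fin m →₀ ℕ)
    (h : monomial e (1:k) ∈ I) : ∃ e', e' ≤ e ∧ IsMinMonomialGen I e' := by
  induction e using WellFoundedLT.induction with
  | _ e IH =>
    by_cases hmin : ∀ e' ≤ e, e' ≠ e → monomial e' (1:k) ∉ I
    · exact ⟨e, le_refl e, h, hmin⟩
    · push_neg at hmin
      obtain ⟨e', hle, hne, hmem⟩ := hmin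
      obtain ⟨e'', h1, h2⟩ := IH e' (lt_of_le_of_ne hle hne) hmem
      exact ⟨e'', h1.trans hle, h2⟩

lemma isMonomialIdeal_top : IsMonomialIdeal (⊤ : Ideal (MvPolynomial (Fin m) k)) := by
  refine ⟨{0}, ?_⟩
  rw [Set.image_singleton]
  have : (monomial (0 : Fin m →₀ ℕ) (1:k)) = 1 := by
    rw [monomial_zero']; exact map_one _
  rw [this, Ideal.span_singleton_one]

lemma span_mono_mul (S T : Set (Fin m →₀ ℕ)) :
    Ideal.span ((fun c => monomial c (1:k)) '' S) * Ideal.span ((fun c => monomial c (1:k)) '' T)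
      = Ideal.span ((fun c => monomial c (1:k)) '' Set.image2 (· + ·) S T) := by
  rw [Ideal.span_mul_span']
  congr 1
  ext p
  rw [Set.mem_mul]
  simp only [Set.mem_image, Set.mem_image2]
  constructor
  · rintro ⟨q, ⟨a, ha, rfl⟩, r, ⟨b, hb, rfl⟩, rfl⟩
    exact ⟨a + b, ⟨a, ha, b, hb, rfl⟩, by rw [monomial_mul, one_mul]⟩
  · rintro ⟨c, ⟨a, ha, b, hb, rfl⟩, rfl⟩
    exact ⟨_, ⟨a, ha, rfl⟩, _, ⟨b, hb, rfl⟩, by rw [monomial_mul, one_mul]⟩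

lemma isMonomialIdeal_mul {I J : Ideal (MvPolynomial (Fin m) k)}
    (hI : IsMonomialIdeal I) (hJ : IsMonomialIdeal J) : IsMonomialIdeal (I * J) := by
  obtain ⟨S, rfl⟩ := hI
  obtain ⟨T, rfl⟩ := hJ
  exact ⟨_, span_mono_mul S T⟩

lemma isMonomialIdeal_pow {I : Ideal (MvPolynomial (Fin m) k)}
    (hI : IsMonomialIdeal I) (s : ℕ) : IsMonomialIdeal (I ^ s) := by
  induction s with
  | zero => simpa using isMonomialIdeal_top
  | succ n IH => rw [pow_succ]; exact isMonomialIdeal_mul IH hI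

lemma mem_mul_iff {I J : Ideal (MvPolynomial (Fin m) k)}
    (hI : IsMonomialIdeal I) (hJ : IsMonomialIdeal J) (e : Fin m →₀ ℕ) :
    monomial e (1:k) ∈ I * J ↔
      ∃ a b, monomial a (1:k) ∈ I ∧ monomial b (1:k) ∈ J ∧ a + b ≤ e := by
  constructor
  · intro h
    obtain ⟨S, rfl⟩ := hI
    obtain ⟨T, rfl⟩ := hJ
    rw [span_mono_mul, mem_span_mono] at h
    obtain ⟨c, ⟨a, ha, b, hb, rfl⟩, hle⟩ := h
    exact ⟨a, b, Ideal.subset_span ⟨a, ha, rfl⟩, Ideal.subset_span ⟨b, hb, rfl⟩, hle⟩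
  · rintro ⟨a, b, ha, hb, hle⟩
    have h2 : monomial a (1:k) * monomial b 1 ∈ I * J := Ideal.mul_mem_mul ha hb
    rw [monomial_mul, one_mul] at h2
    exact mono_mem_of_le hle h2

lemma mem_pow_iff {I : Ideal (MvPolynomial (Fin m) k)} (hI : IsMonomialIdeal I) (s : ℕ)
    (e : Fin m →₀ ℕ) :
    monomial e (1:k) ∈ I ^ s ↔
      ∃ f : Fin s → (Fin m →₀ ℕ), (∀ j, monomial (f j) (1:k) ∈ I) ∧ ∑ j, f j ≤ e := by
  induction s generalizing e with
  | zero =>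
    simp only [pow_zero, Ideal.one_eq_top, Submodule.mem_top, true_iff]
    exact ⟨fun j => 0, fun j => j.elim0, by simp⟩
  | succ n IH =>
    rw [pow_succ']
    rw [mem_mul_iff hI (isMonomialIdeal_pow hI n)]
    constructor
    · rintro ⟨a, b, ha, hb, hle⟩
      obtain ⟨f, hf, hsum⟩ := (IH b).mp hb
      refine ⟨Fin.cons a f, ?_, ?_⟩
      · intro j
        refine Fin.cases ?_ ?_ j
        · simpa using ha
        · intro i; simpa using hf i
      · rw [Fin.sum_cons]
        exact le_trans (add_le_add le_rfl hsum) hle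
    · rintro ⟨f, hf, hsum⟩
      refine ⟨f 0, ∑ i : Fin n, f i.succ, hf 0, (IH _).mpr ⟨fun i => f i.succ,
        fun i => hf _, le_refl _⟩, ?_⟩
      rwa [← Fin.sum_univ_succ]

lemma mono_sum_mem_pow {I : Ideal (MvPolynomial (Fin m) k)} {ι : Type*} [DecidableEq ι]
    (t : Finset ι) (g : ι → (Fin m →₀ ℕ)) (h : ∀ l ∈ t, monomial (g l) (1:k) ∈ I) :
    monomial (∑ l ∈ t, g l) (1:k) ∈ I ^ t.card := by
  induction t using Finset.induction_on with
  | empty => simp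
  | insert a t' ha IH =>
    rw [Finset.sum_insert ha, Finset.card_insert_of_notMem ha, pow_succ']
    have h2 : monomial (g a) (1:k) * monomial (∑ l ∈ t', g l) 1 ∈ I * I ^ t'.card :=
      Ideal.mul_mem_mul (h a (Finset.mem_insert_self a t'))
        (IH fun l hl => h l (Finset.mem_insert_of_mem hl))
    rwa [monomial_mul, one_mul] at h2

lemma sub_single_add {a c : Fin m →₀ ℕ} {i : Fin m} (h : a i ≠ 0) :
    (a + c) - Finsupp.single i 1 = (a - Finsupp.single i 1) + c := by
  ext l
  simp only [Finsupp.tsub_apply, Finsupp.add_apply, Finsupp.single_apply]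
  rcases eq_or_ne i l with rfl | hil
  · rw [if_pos rfl]
    have := h
    omega
  · rw [if_neg hil]
    omega

lemma pstar_mem {L : Ideal (MvPolynomial (Fin m) k)} {e : Fin m →₀ ℕ} {i : Fin m}
    (hmin : IsMinMonomialGen L e) (hi : e i ≠ 0) :
    monomial (e - Finsupp.single i 1) (1:k) ∈ partialStar L :=
  Ideal.subset_span ⟨e, i, hmin, hi, rfl⟩

lemma keyK {L : Ideal (MvPolynomial (Fin m) k)} (hne : L ≠ ⊤)
    {e : Fin m →₀ ℕ} {i : Fin m} (h : monomial e (1:k) ∈ L) (hi : e i ≠ 0) :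
    monomial (e - Finsupp.single i 1) (1:k) ∈ partialStar L := by
  obtain ⟨e', hle, hmin⟩ := exists_minGen L e h
  have he0 : e' ≠ 0 := by
    rintro rfl
    apply hne
    rw [Ideal.eq_top_iff_one]
    have h1 : (1 : MvPolynomial (Fin m) k) = monomial 0 1 := by rw [monomial_zero', map_one]
    rw [h1]; exact hmin.1
  by_cases hei : e' i ≠ 0
  · exact mono_mem_of_le (tsub_le_tsub_right hle _) (pstar_mem hmin hei)
  · push_neg at hei
    obtain ⟨j, hj⟩ : ∃ j, e' j ≠ 0 := by
      by_contra hc; push_neg at hc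
      exact he0 (Finsupp.ext fun j => hc j)
    have hji : j ≠ i := fun hh => hj (hh ▸ hei)
    have hle2 : e' - Finsupp.single j 1 ≤ e - Finsupp.single i 1 := by
      rw [Finsupp.le_def]
      intro l
      have h3 := Finsupp.le_def.mp hle l
      simp only [Finsupp.tsub_apply, Finsupp.single_apply]
      rcases eq_or_ne i l with rfl | hil
      · rw [if_neg (fun hh : j = i => hji hh), if_pos rfl]
        omega
      · rw [if_neg hil]
        split_ifs with h1 <;> omega
    exact mono_mem_of_le hle2 (pstar_mem hmin hj)

end Aux

/-- For a monomial ideal `I` of `k[x_1, …, x_m]` and `s ≥ 1`,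
`∂*(I^s) = ∂*(I) I^(s-1)`. -/
theorem partialStar_pow [Field k] (I : Ideal (MvPolynomial (Fin m) k))
    (hmon : IsMonomialIdeal I) (s : ℕ) (hs : 1 ≤ s) :
    partialStar (I ^ s) = partialStar I * I ^ (s - 1) := by
  by_cases htop : I = ⊤
  · subst htop
    have hp : partialStar (⊤ : Ideal (MvPolynomial (Fin m) k)) = ⊥ := by
      rw [partialStar]
      convert Ideal.span_empty
      rw [Set.eq_empty_iff_forall_notMem]
      rintro p ⟨e, i, ⟨hmem, hmin⟩, hi, rfl⟩
      have he : e ≠ 0 := fun h => hi (by rw [h]; rfl)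
      exact hmin 0 (zero_le (a := e)) (Ne.symm he) Submodule.mem_top
    rw [Ideal.top_pow, hp]
    simp
  · apply le_antisymm
    · rw [partialStar, Ideal.span_le]
      rintro p ⟨e, i, ⟨heI, hemin⟩, hi, rfl⟩
      rw [SetLike.mem_coe]
      rw [mem_pow_iff hmon s] at heI
      obtain ⟨f, hf, hsum⟩ := heI
      have hch : ∀ j, ∃ g, g ≤ f j ∧ IsMinMonomialGen I g := fun j => exists_minGen I _ (hf j)
      choose g hg1 hg2 using hch
      have hsum' : ∑ j, g j ≤ e := le_trans (Finset.sum_le_sum fun j _ => hg1 j) hsum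
      have hmemg : monomial (∑ j, g j) (1:k) ∈ I ^ s :=
        (mem_pow_iff hmon s _).mpr ⟨g, fun j => (hg2 j).1, le_refl _⟩
      have heq : ∑ j, g j = e := by
        by_contra hne
        exact hemin _ hsum' hne hmemg
      have hex : ∃ j, g j i ≠ 0 := by
        by_contra hc; push_neg at hc
        apply hi
        rw [← heq, Finsupp.finset_sum_apply]
        exact Finset.sum_eq_zero fun j _ => hc j
      obtain ⟨j, hji⟩ := hex
      have hdecomp : e = g j + ∑ l ∈ Finset.univ.erase j, g l := by
        rw [Finset.add_sum_erase _ _ (Finset.mem_univ j), heq]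
      have hmono : monomial (e - Finsupp.single i 1) (1:k)
          = monomial (g j - Finsupp.single i 1) 1
            * monomial (∑ l ∈ Finset.univ.erase j, g l) 1 := by
        rw [monomial_mul, one_mul, hdecomp, sub_single_add hji]
      rw [hmono]
      have hcard : (Finset.univ.erase j).card = s - 1 := by
        rw [Finset.card_erase_of_mem (Finset.mem_univ j), Finset.card_univ, Fintype.card_fin]
      have h2 : monomial (∑ l ∈ Finset.univ.erase j, g l) (1:k) ∈ I ^ (s-1) := by
        rw [← hcard]; exact mono_sum_mem_pow _ _ fun l _ => (hg2 l).1
      exact Ideal.mul_mem_mul (pstar_mem (hg2 j) hji) h2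
    · obtain ⟨T, hT⟩ := isMonomialIdeal_pow hmon (s-1)
      have hseq : I * I ^ (s - 1) = I ^ s := by
        rw [← pow_succ', Nat.sub_add_cancel hs]
      have hine : I ^ s ≠ ⊤ := by
        intro h
        exact htop (top_le_iff.mp (h ▸ Ideal.pow_le_self (by omega)))
      rw [partialStar, hT, Ideal.span_mul_span', Ideal.span_le]
      rintro p hp
      rw [Set.mem_mul] at hp
      obtain ⟨q, ⟨e, i, hmin, hi, rfl⟩, r, ⟨t, ht, rfl⟩, rfl⟩ := hp
      have htI : monomial t (1:k) ∈ I ^ (s-1) := by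
        rw [hT]; exact Ideal.subset_span ⟨t, ht, rfl⟩
      have hmemE : monomial (e + t) (1:k) ∈ I ^ s := by
        have hmul := Ideal.mul_mem_mul hmin.1 htI
        rw [monomial_mul, one_mul, hseq] at hmul
        exact hmul
      have hit : (e + t) i ≠ 0 := by
        rw [Finsupp.add_apply]
        omega
      have hk := keyK hine hmemE hit
      rw [SetLike.mem_coe, monomial_mul, one_mul]
      rwa [sub_single_add hi] at hk
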